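/- arXiv:2111.07111 — 2 statements merged into one kernel-verified Lean document; each statement's English description precedes it below -/
import Mathlib

section
/- There exists a constant C > 0 such that for every complex-valued function g that is twice continuously differentiable on [0,1], ∫₀¹ |(d/dr)(r·g(r))|²·(1/r) dr ≤ C·(∫₀¹ ((1−r²)/r)·|(d/dr)(r·g(r))|² dr)^{2/3}·(∫₀¹ |(𝓛g)(r)|²·r dr)^{1/3} + C·∫₀¹ ((1−r²)/r)·|(d/dr)(r·g(r))|² dr, where all quantities are interpreted in [0,+∞]. (Lemma A.4, second weighted interpolation inequality.) -/
set_option maxHeartbeats 1000000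

open MeasureTheory Filter

/-- One-sided derivative on `(0,1]`. -/
noncomputable def dz (g : ℝ → ℂ) : ℝ → ℂ := derivWithin g (Set.Ioc 0 1)

/-- The operator `(𝓛 g)(r) = g''(r) + (1/r) g'(r) − (1/r²) g(r)`. -/
noncomputable def Lop (g : ℝ → ℂ) : ℝ → ℂ := fun r =>
  dz (dz g) r + ((r : ℂ))⁻¹ * dz g r - (((r : ℂ)) ^ 2)⁻¹ * g r

/-- Weighted integral over `(0,1)` with values in `[0,∞]`. -/
noncomputable def wInt (h : ℝ → ℝ) : ENNReal :=
  ∫⁻ r in Set.Ioo (0 : ℝ) 1, ENNReal.ofReal (h r)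

open Set


lemma two_mul_le' (a b ε : ℝ) (hε : 0 < ε) : 2 * (a * b) ≤ ε * a^2 + ε⁻¹ * b^2 := by
  rw [← sub_nonneg]
  have h : ε * a^2 + ε⁻¹ * b^2 - 2*(a*b) = (ε*a - b)^2 / ε := by
    field_simp; ring
  rw [h]; positivity

lemma core_key (f F : ℝ → ℂ)
    (hf : ContinuousOn f (Ioc 0 1)) (hF : ContinuousOn F (Ioc 0 1))
    (hd : ∀ r ∈ Ioo (0:ℝ) 1, HasDerivAt f (F r) r)
    (e d : ℝ) (he : 0 ≤ e) (hdd : 0 ≤ d)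
    (hE : (∫⁻ r in Ioo (0:ℝ) 1, ENNReal.ofReal ((1 - r^2) * r * ‖f r‖^2)) ≤ ENNReal.ofReal e)
    (hD : (∫⁻ r in Ioo (0:ℝ) 1, ENNReal.ofReal (‖F r‖^2 * r)) ≤ ENNReal.ofReal d)
    (δ : ℝ) (hδ0 : 0 < δ) (hδ4 : δ ≤ 1/4) :
    (∫⁻ r in Ioo (0:ℝ) 1, ENNReal.ofReal (r * ‖f r‖^2))
      ≤ ENNReal.ofReal (5 * e / δ + 16 * δ^2 * d) := by
  have hδ1 : δ < 1 := by linarith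
  have h2δ : (0:ℝ) < 1 - 2*δ := by linarith
  have hhalf : (1:ℝ)/2 ≤ 1 - 2*δ := by linarith
  have hwc : ContinuousOn (fun t => ‖f t‖^2) (Ioc (0:ℝ) 1) := (hf.norm).pow 2
  have hsub1 : Icc (1-2*δ) (1-δ) ⊆ Ioc (0:ℝ) 1 :=
    fun x hx => ⟨lt_of_lt_of_le h2δ hx.1, le_trans hx.2 (by linarith)⟩
  obtain ⟨s, hsmem, hsmin⟩ := isCompact_Icc.exists_isMinOn
    (nonempty_Icc.mpr (by linarith)) (hwc.mono hsub1)
  have hs0 : (0:ℝ) < s := lt_of_lt_of_le h2δ hsmem.1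
  have hs1 : s ≤ 1 - δ := hsmem.2
  have hshalf : (1:ℝ)/2 ≤ s := le_trans hhalf hsmem.1
  have hm0 : 0 ≤ ‖f s‖^2 := sq_nonneg _
  -- bound on the minimum value
  have hm : δ^2 * ‖f s‖^2 ≤ 2 * e := by
    have h2δ : (0:ℝ) < 1 - 2*δ := by linarith
    have hkey : ENNReal.ofReal (δ * ‖f s‖^2 / 2 * δ) ≤ ENNReal.ofReal e := by
      have hmeas : AEMeasurable (fun r => ENNReal.ofReal ((1 - r^2) * r * ‖f r‖^2))
          (volume.restrict (Ioo (1-2*δ) (1-δ))) := by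
        apply AEMeasurable.ennreal_ofReal
        apply ContinuousOn.aemeasurable _ measurableSet_Ioo
        exact (((continuous_const.sub (continuous_pow 2)).continuousOn.mul
          continuous_id.continuousOn).mul (hwc.mono (fun x hx => hsub1 (Ioo_subset_Icc_self hx))))
      calc ENNReal.ofReal (δ * ‖f s‖^2 / 2 * δ)
          = ENNReal.ofReal (δ * ‖f s‖^2 / 2) * volume (Ioo (1-2*δ) (1-δ)) := by
            rw [Real.volume_Ioo, ← ENNReal.ofReal_mul (by positivity)]
            congr 2; ring
        _ = ∫⁻ _r in Ioo (1-2*δ) (1-δ), ENNReal.ofReal (δ * ‖f s‖^2 / 2) := (setLIntegral_const _ _).symm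
        _ ≤ ∫⁻ r in Ioo (1-2*δ) (1-δ), ENNReal.ofReal ((1 - r^2) * r * ‖f r‖^2) := by
            apply setLIntegral_mono_ae hmeas
            filter_upwards with r hr
            apply ENNReal.ofReal_le_ofReal
            have h1 : δ ≤ 1 - r^2 := by nlinarith [hr.1, hr.2]
            have h2 : (1:ℝ)/2 ≤ r := by nlinarith [hr.1]
            have h3 : ‖f s‖^2 ≤ ‖f r‖^2 := hsmin ⟨hr.1.le, hr.2.le⟩
            have h4 : δ * (1/2) ≤ (1 - r^2) * r :=
              mul_le_mul h1 h2 (by norm_num) (by linarith)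
            have h5 : δ * (1/2) * ‖f s‖^2 ≤ ((1 - r^2) * r) * ‖f r‖^2 :=
              mul_le_mul h4 h3 (sq_nonneg _) (by nlinarith)
            nlinarith [h5]
        _ ≤ ∫⁻ r in Ioo (0:ℝ) 1, ENNReal.ofReal ((1 - r^2) * r * ‖f r‖^2) := by
            apply lintegral_mono_set
            intro x hx
            exact ⟨lt_trans h2δ hx.1, lt_of_lt_of_le hx.2 (by linarith)⟩
        _ ≤ ENNReal.ofReal e := hE
    have := (ENNReal.ofReal_le_ofReal_iff he).mp hkey
    nlinarith
  -- maximum over [s,1]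
  have hsubK : Icc s 1 ⊆ Ioc (0:ℝ) 1 := fun x hx => ⟨lt_of_lt_of_le hs0 hx.1, hx.2⟩
  obtain ⟨u, humem, humax⟩ := isCompact_Icc.exists_isMaxOn
    (nonempty_Icc.mpr (by linarith)) (hwc.mono hsubK)
  have hS0 : 0 ≤ ‖f u‖^2 := sq_nonneg _
  have hs2δ : 1 - 2*δ ≤ s := hsmem.1
  have hSle : ∀ r ∈ Icc s 1, ‖f r‖^2 ≤ ‖f s‖^2 + (1/2) * ‖f u‖^2 + 8*δ*d := by
    -- the derivative of ‖f‖²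
    set p : ℝ → ℝ := fun t => (inner ℝ (f t) (F t) : ℝ) + (inner ℝ (F t) (f t) : ℝ) with hp_def
    have hpc : ContinuousOn p (Ioc (0:ℝ) 1) := (hf.inner hF).add (hF.inner hf)
    have hwd : ∀ r ∈ Ioo (0:ℝ) 1, HasDerivAt (fun t => ‖f t‖^2) (p r) r := by
      intro r hr
      have h := (hd r hr).inner ℝ (hd r hr)
      have heq : (fun t => (inner ℝ (f t) (f t) : ℝ)) = (fun t => ‖f t‖^2) := by
        funext t; rw [real_inner_self_eq_norm_sq]
      rwa [heq] at h
    have hpbound : ∀ t ∈ Ioc (0:ℝ) 1, p t ≤ (4*δ)⁻¹ * ‖f t‖^2 + (4*δ) * ‖F t‖^2 := by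
      intro t _
      have h1 : (inner ℝ (f t) (F t) : ℝ) ≤ ‖f t‖ * ‖F t‖ := real_inner_le_norm _ _
      have h2 : (inner ℝ (F t) (f t) : ℝ) ≤ ‖F t‖ * ‖f t‖ := real_inner_le_norm _ _
      have key : 2 * (‖f t‖ * ‖F t‖) ≤ (4*δ)⁻¹ * ‖f t‖^2 + (4*δ)⁻¹⁻¹ * ‖F t‖^2 :=
        two_mul_le' _ _ _ (by positivity)
      rw [inv_inv] at key
      simp only [hp_def]
      nlinarith [h1, h2, key]
    intro r hr
    have hsr : s ≤ r := hr.1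
    have hIccsub : Icc s r ⊆ Ioc (0:ℝ) 1 := fun x hx => ⟨lt_of_lt_of_le hs0 hx.1, le_trans hx.2 hr.2⟩
    have huIcc : uIcc s r = Icc s r := uIcc_of_le hsr
    have hftc : ∫ t in s..r, p t = ‖f r‖^2 - ‖f s‖^2 := by
      apply intervalIntegral.integral_eq_sub_of_hasDeriv_right_of_le hsr (hwc.mono hIccsub)
      · intro x hx
        exact (hwd x ⟨hs0.trans hx.1, lt_of_lt_of_le hx.2 hr.2⟩).hasDerivWithinAt
      · exact (hpc.mono (huIcc ▸ hIccsub)).intervalIntegrable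
    have hwint : IntervalIntegrable (fun t => ‖f t‖^2) volume s r :=
      (hwc.mono (huIcc ▸ hIccsub)).intervalIntegrable
    have hFsq : ContinuousOn (fun t => ‖F t‖^2) (Ioc (0:ℝ) 1) := (hF.norm).pow 2
    have hFint : IntervalIntegrable (fun t => ‖F t‖^2) volume s r :=
      (hFsq.mono (huIcc ▸ hIccsub)).intervalIntegrable
    have hpint : IntervalIntegrable p volume s r := (hpc.mono (huIcc ▸ hIccsub)).intervalIntegrable
    have hqint : IntervalIntegrable (fun t => (4*δ)⁻¹ * ‖f t‖^2 + (4*δ) * ‖F t‖^2) volume s r :=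
      (hwint.const_mul _).add (hFint.const_mul _)
    have hq : ∫ t in s..r, p t ≤ ∫ t in s..r, ((4*δ)⁻¹ * ‖f t‖^2 + (4*δ)*‖F t‖^2) :=
      intervalIntegral.integral_mono_on hsr hpint hqint (fun x hx => hpbound x (hIccsub hx))
    have hsplit : ∫ t in s..r, ((4*δ)⁻¹ * ‖f t‖^2 + (4*δ)*‖F t‖^2)
        = ((4*δ)⁻¹ * ∫ t in s..r, ‖f t‖^2) + ((4*δ) * ∫ t in s..r, ‖F t‖^2) := by
      rw [intervalIntegral.integral_add (hwint.const_mul _) (hFint.const_mul _),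
        intervalIntegral.integral_const_mul, intervalIntegral.integral_const_mul]
    have hw_le : ∫ t in s..r, ‖f t‖^2 ≤ (r - s) * ‖f u‖^2 := by
      have h1 : ∫ t in s..r, ‖f t‖^2 ≤ ∫ t in s..r, ‖f u‖^2 :=
        intervalIntegral.integral_mono_on hsr hwint intervalIntegrable_const
          (fun x hx => humax ⟨hx.1, le_trans hx.2 hr.2⟩)
      simpa [intervalIntegral.integral_const, smul_eq_mul] using h1
    have hc2 : ContinuousOn (fun t => 2*(‖F t‖^2*t)) (Ioc (0:ℝ) 1) :=
      continuousOn_const.mul (hFsq.mul continuousOn_id)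
    have hF_le : ∫ t in s..r, ‖F t‖^2 ≤ 2*d := by
      have hmono : ∫ t in s..r, ‖F t‖^2 ≤ ∫ t in s..r, 2*(‖F t‖^2 * t) := by
        apply intervalIntegral.integral_mono_on hsr hFint
          ((hc2.mono (huIcc ▸ hIccsub)).intervalIntegrable)
        intro x hx
        have hx2 : (1:ℝ)/2 ≤ x := le_trans hshalf hx.1
        nlinarith [sq_nonneg ‖F x‖]
      have h2 : ∫ t in s..r, 2*(‖F t‖^2*t) = 2 * ∫ t in Ioc s r, ‖F t‖^2 * t := by
        rw [intervalIntegral.integral_const_mul, intervalIntegral.integral_of_le hsr]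
      have hFI : IntegrableOn (fun t => ‖F t‖^2 * t) (Ioc s r) := by
        exact (ContinuousOn.integrableOn_Icc ((hFsq.mul continuousOn_id).mono hIccsub)).mono_set
          Ioc_subset_Icc_self
      have h3 : ENNReal.ofReal (∫ t in Ioc s r, ‖F t‖^2 * t)
          = ∫⁻ t in Ioc s r, ENNReal.ofReal (‖F t‖^2 * t) := by
        apply ofReal_integral_eq_lintegral_ofReal hFI
        filter_upwards [ae_restrict_mem measurableSet_Ioc] with t ht
        have ht0 : (0:ℝ) < t := lt_of_lt_of_le hs0 ht.1.le
        positivity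
      have h4 : (∫⁻ t in Ioc s r, ENNReal.ofReal (‖F t‖^2 * t)) ≤ ENNReal.ofReal d := by
        rw [← setLIntegral_congr Ioo_ae_eq_Ioc]
        refine le_trans (lintegral_mono_set ?_) hD
        intro x hx; exact ⟨hs0.trans hx.1, lt_of_lt_of_le hx.2 hr.2⟩
      have h5 : ∫ t in Ioc s r, ‖F t‖^2 * t ≤ d := (ENNReal.ofReal_le_ofReal_iff hdd).mp (h3 ▸ h4)
      linarith
    have hrs : r - s ≤ 2*δ := by linarith [hr.2]
    have hmulw : (4*δ)⁻¹ * (∫ t in s..r, ‖f t‖^2) ≤ (1/2)*‖f u‖^2 := by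
      have h6 : (∫ t in s..r, ‖f t‖^2) ≤ (2*δ) * ‖f u‖^2 :=
        le_trans hw_le (mul_le_mul_of_nonneg_right hrs (sq_nonneg _))
      have h7 : (4*δ)⁻¹ * ((2*δ) * ‖f u‖^2) = (1/2) * ‖f u‖^2 := by
        field_simp; ring
      calc (4*δ)⁻¹ * (∫ t in s..r, ‖f t‖^2) ≤ (4*δ)⁻¹*((2*δ)*‖f u‖^2) :=
            mul_le_mul_of_nonneg_left h6 (by positivity)
        _ = (1/2)*‖f u‖^2 := h7
    have hmulF : (4*δ) * (∫ t in s..r, ‖F t‖^2) ≤ 8*δ*d := by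
      have := mul_le_mul_of_nonneg_left hF_le (by positivity : (0:ℝ) ≤ 4*δ)
      linarith
    linarith [hq, hsplit ▸ hq, hftc ▸ hq]
  have hSbound : ‖f u‖^2 ≤ 4*e/δ^2 + 16*δ*d := by
    have h1 := hSle u humem
    have h2 : ‖f s‖^2 ≤ 2*e/δ^2 := by
      rw [le_div_iff₀ (by positivity)]; nlinarith
    have h3 : (0:ℝ) < δ^2 := by positivity
    have : ‖f u‖^2 ≤ 2 * ‖f s‖^2 + 16*δ*d := by linarith
    have h4 : 2 * (2*e/δ^2) = 4*e/δ^2 := by ring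
    linarith
  -- split the integral
  have hsplitset : Ioo (0:ℝ) 1 = Ioo 0 (1-δ) ∪ Ico (1-δ) 1 :=
    (Ioo_union_Ico_eq_Ioo (by linarith) (by linarith)).symm
  have hdisj : Disjoint (Ioo (0:ℝ) (1-δ)) (Ico (1-δ) 1) := by
    rw [Set.disjoint_left]; rintro x hx1 hx2; exact absurd hx1.2 (not_lt.mpr hx2.1)
  rw [hsplitset, lintegral_union measurableSet_Ico hdisj]
  have hP1 : (∫⁻ r in Ioo (0:ℝ) (1-δ), ENNReal.ofReal (r * ‖f r‖^2)) ≤ ENNReal.ofReal (e/δ) := by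
    have hmeas : AEMeasurable (fun r => ENNReal.ofReal δ⁻¹ * ENNReal.ofReal ((1 - r^2) * r * ‖f r‖^2))
        (volume.restrict (Ioo (0:ℝ) (1-δ))) := by
      apply AEMeasurable.const_mul
      apply AEMeasurable.ennreal_ofReal
      apply ContinuousOn.aemeasurable _ measurableSet_Ioo
      exact ((continuous_const.sub (continuous_pow 2)).continuousOn.mul
        continuous_id.continuousOn).mul
        (((hf.norm).pow 2).mono (fun x hx => ⟨hx.1, le_trans hx.2.le (by linarith)⟩))
    calc (∫⁻ r in Ioo (0:ℝ) (1-δ), ENNReal.ofReal (r * ‖f r‖^2))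
        ≤ ∫⁻ r in Ioo (0:ℝ) (1-δ), ENNReal.ofReal δ⁻¹ * ENNReal.ofReal ((1 - r^2) * r * ‖f r‖^2) := by
          apply setLIntegral_mono_ae hmeas
          filter_upwards with r hr
          rw [← ENNReal.ofReal_mul (by positivity)]
          apply ENNReal.ofReal_le_ofReal
          have h1 : δ ≤ 1 - r^2 := by nlinarith [hr.1, hr.2]
          have h2 : δ⁻¹ * δ = 1 := inv_mul_cancel₀ hδ0.ne'
          have h3 : r * ‖f r‖^2 = δ⁻¹ * (δ * (r * ‖f r‖^2)) := by
            rw [← mul_assoc, h2, one_mul]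
          rw [h3]
          apply mul_le_mul_of_nonneg_left _ (by positivity)
          have h4 : δ * r ≤ (1 - r^2) * r := mul_le_mul_of_nonneg_right h1 hr.1.le
          nlinarith [sq_nonneg ‖f r‖]
      _ = ENNReal.ofReal δ⁻¹ * ∫⁻ r in Ioo (0:ℝ) (1-δ), ENNReal.ofReal ((1 - r^2) * r * ‖f r‖^2) :=
          lintegral_const_mul' _ _ ENNReal.ofReal_ne_top
      _ ≤ ENNReal.ofReal δ⁻¹ * ENNReal.ofReal e := by
          gcongr
          exact le_trans (lintegral_mono_set (Ioo_subset_Ioo le_rfl (by linarith))) hE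
      _ = ENNReal.ofReal (e/δ) := by
          rw [← ENNReal.ofReal_mul (by positivity)]
          congr 1
          field_simp
  have hP2 : (∫⁻ r in Ico (1-δ) (1:ℝ), ENNReal.ofReal (r * ‖f r‖^2))
      ≤ ENNReal.ofReal (4*e/δ + 16*δ^2*d) := by
    calc (∫⁻ r in Ico (1-δ) (1:ℝ), ENNReal.ofReal (r * ‖f r‖^2))
        ≤ ∫⁻ _r in Ico (1-δ) (1:ℝ), ENNReal.ofReal (‖f u‖^2) := by
          apply setLIntegral_mono_ae aemeasurable_const
          filter_upwards with r hr
          apply ENNReal.ofReal_le_ofReal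
          have h1 : ‖f r‖^2 ≤ ‖f u‖^2 := humax ⟨le_trans hs1 hr.1, hr.2.le⟩
          have h2 : 0 ≤ r := le_trans (by linarith) hr.1
          nlinarith [sq_nonneg ‖f r‖, hr.2]
      _ = ENNReal.ofReal (‖f u‖^2) * ENNReal.ofReal δ := by
          rw [setLIntegral_const, Real.volume_Ico]
          norm_num
      _ = ENNReal.ofReal (‖f u‖^2 * δ) := (ENNReal.ofReal_mul (sq_nonneg _)).symm
      _ ≤ ENNReal.ofReal (4*e/δ + 16*δ^2*d) := by
          apply ENNReal.ofReal_le_ofReal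
          have h3 : ‖f u‖^2 * δ ≤ (4*e/δ^2 + 16*δ*d) * δ :=
            mul_le_mul_of_nonneg_right hSbound hδ0.le
          have h4 : (4*e/δ^2 + 16*δ*d) * δ = 4*e/δ + 16*δ^2*d := by
            field_simp
          linarith
  calc (∫⁻ r in Ioo (0:ℝ) (1-δ), ENNReal.ofReal (r * ‖f r‖^2))
        + (∫⁻ r in Ico (1-δ) (1:ℝ), ENNReal.ofReal (r * ‖f r‖^2))
      ≤ ENNReal.ofReal (e/δ) + ENNReal.ofReal (4*e/δ + 16*δ^2*d) := add_le_add hP1 hP2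
    _ = ENNReal.ofReal (5 * e / δ + 16 * δ^2 * d) := by
        rw [← ENNReal.ofReal_add (by positivity) (by positivity)]
        congr 1; ring


lemma core (f F : ℝ → ℂ)
    (hf : ContinuousOn f (Ioc 0 1)) (hF : ContinuousOn F (Ioc 0 1))
    (hd : ∀ r ∈ Ioo (0:ℝ) 1, HasDerivAt f (F r) r) :
    (∫⁻ r in Ioo (0:ℝ) 1, ENNReal.ofReal (r * ‖f r‖^2))
      ≤ ENNReal.ofReal 84
          * (∫⁻ r in Ioo (0:ℝ) 1, ENNReal.ofReal ((1 - r^2) * r * ‖f r‖^2)) ^ ((2:ℝ)/3)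
          * (∫⁻ r in Ioo (0:ℝ) 1, ENNReal.ofReal (‖F r‖^2 * r)) ^ ((1:ℝ)/3)
        + ENNReal.ofReal 84
          * (∫⁻ r in Ioo (0:ℝ) 1, ENNReal.ofReal ((1 - r^2) * r * ‖f r‖^2)) := by
  set E := ∫⁻ r in Ioo (0:ℝ) 1, ENNReal.ofReal ((1 - r^2) * r * ‖f r‖^2) with hE_def
  set D := ∫⁻ r in Ioo (0:ℝ) 1, ENNReal.ofReal (‖F r‖^2 * r) with hD_def
  set L := ∫⁻ r in Ioo (0:ℝ) 1, ENNReal.ofReal (r * ‖f r‖^2) with hL_def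
  rcases eq_or_ne E ⊤ with hEtop | hEtop
  · have h84 : (ENNReal.ofReal 84) ≠ 0 := by simp
    have h : ENNReal.ofReal 84 * E = ⊤ := by rw [hEtop, ENNReal.mul_top h84]
    rw [h]
    simp
  · rcases eq_or_ne E 0 with hE0 | hE0
    · -- L = 0
      have hEmeas : AEMeasurable (fun r => ENNReal.ofReal ((1 - r^2) * r * ‖f r‖^2))
          (volume.restrict (Ioo (0:ℝ) 1)) := by
        apply AEMeasurable.ennreal_ofReal
        apply ContinuousOn.aemeasurable _ measurableSet_Ioo
        exact ((continuous_const.sub (continuous_pow 2)).continuousOn.mul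
          continuous_id.continuousOn).mul
          (((hf.norm).pow 2).mono (fun x hx => ⟨hx.1, hx.2.le⟩))
      have hae2 : (fun r => ENNReal.ofReal ((1 - r^2) * r * ‖f r‖^2))
          =ᵐ[volume.restrict (Ioo (0:ℝ) 1)] 0 :=
        (lintegral_eq_zero_iff' hEmeas).mp (hE_def.symm.trans hE0)
      have hL0 : L = 0 := by
        rw [hL_def]
        rw [lintegral_eq_zero_iff' ?hmeas]
        case hmeas =>
          apply AEMeasurable.ennreal_ofReal
          apply ContinuousOn.aemeasurable _ measurableSet_Ioo
          exact continuous_id.continuousOn.mul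
            (((hf.norm).pow 2).mono (fun x hx => ⟨hx.1, hx.2.le⟩))
        filter_upwards [hae2, ae_restrict_mem measurableSet_Ioo] with r h1 h2
        simp only [Pi.zero_apply] at h1
        have h3 : (1 - r^2) * r * ‖f r‖^2 ≤ 0 := ENNReal.ofReal_eq_zero.mp h1
        simp only [Pi.zero_apply]
        rw [ENNReal.ofReal_eq_zero]
        have h4 : 0 < (1 - r^2)*r := by nlinarith [h2.1, h2.2]
        have h5 : ‖f r‖^2 ≤ 0 := by nlinarith [h4]
        nlinarith [mul_nonneg h2.1.le (neg_nonneg.mpr h5)]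
      rw [hL0]; exact zero_le
    · rcases eq_or_ne D ⊤ with hDtop | hDtop
      · have hne : ENNReal.ofReal 84 * E ^ ((2:ℝ)/3) ≠ 0 := by
          apply mul_ne_zero
          · simp
          · intro hcon
            rw [ENNReal.rpow_eq_zero_iff] at hcon
            rcases hcon with ⟨h, _⟩ | ⟨_, hlt⟩
            · exact hE0 h
            · norm_num at hlt
        have : ENNReal.ofReal 84 * E ^ ((2:ℝ)/3) * D ^ ((1:ℝ)/3) = ⊤ := by
          rw [hDtop, ENNReal.top_rpow_of_pos (by norm_num), ENNReal.mul_top hne]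
        rw [this]
        simp
      · -- main case
        set e := E.toReal with he_def
        set d := D.toReal with hd_def
        have he0 : 0 < e := ENNReal.toReal_pos hE0 hEtop
        have hd0 : 0 ≤ d := ENNReal.toReal_nonneg
        have hEe : E ≤ ENNReal.ofReal e := le_of_eq (ENNReal.ofReal_toReal hEtop).symm
        have hDd : D ≤ ENNReal.ofReal d := le_of_eq (ENNReal.ofReal_toReal hDtop).symm
        have key := core_key f F hf hF hd e d he0.le hd0 hEe hDd
        have hEor : E = ENNReal.ofReal e := (ENNReal.ofReal_toReal hEtop).symm
        have hDor : D = ENNReal.ofReal d := (ENNReal.ofReal_toReal hDtop).symm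
        rcases le_or_gt d (64*e) with hcase | hcase
        · -- δ = 1/4
          have h1 := key (1/4) (by norm_num) le_rfl
          have h2 : 5 * e / (1/4) + 16 * (1/4)^2 * d = 20*e + d := by ring
          rw [h2] at h1
          calc L ≤ ENNReal.ofReal (20*e + d) := h1
            _ ≤ ENNReal.ofReal (84*e) := ENNReal.ofReal_le_ofReal (by linarith)
            _ = ENNReal.ofReal 84 * E := by
                rw [hEor, ← ENNReal.ofReal_mul (by norm_num)]
            _ ≤ _ := le_add_self
        · -- δ = (e/d)^{1/3}
          have hd0' : 0 < d := lt_trans (by positivity) hcase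
          set a := e ^ ((1:ℝ)/3) with ha_def
          set b := d ^ ((1:ℝ)/3) with hb_def
          have ha0 : 0 < a := Real.rpow_pos_of_pos he0 _
          have hb0 : 0 < b := Real.rpow_pos_of_pos hd0' _
          have ha3 : a^3 = e := by
            rw [ha_def, ← Real.rpow_natCast (e ^ ((1:ℝ)/3)) 3, ← Real.rpow_mul he0.le]
            norm_num
          have hb3 : b^3 = d := by
            rw [hb_def, ← Real.rpow_natCast (d ^ ((1:ℝ)/3)) 3, ← Real.rpow_mul hd0'.le]
            norm_num
          set δ := a / b with hδ_def
          have hδ0 : 0 < δ := by positivity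
          have hδ4 : δ ≤ 1/4 := by
            rw [hδ_def, div_le_iff₀ hb0]
            -- a ≤ b/4  ⟺  64 a³ ≤ b³
            nlinarith [ha3, hb3, sq_nonneg (a - b/4), sq_nonneg (a + b/4), ha0, hb0,
              sq_nonneg a, sq_nonneg b, mul_pos ha0 hb0]
          have h1 := key δ hδ0 hδ4
          have h2 : 5 * e / δ + 16 * δ^2 * d = 21 * (a^2 * b) := by
            rw [hδ_def, ← ha3, ← hb3]
            field_simp
            ring
          rw [h2] at h1
          have hEpow : E ^ ((2:ℝ)/3) = ENNReal.ofReal (a^2) := by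
            rw [hEor, ENNReal.ofReal_rpow_of_pos he0]
            congr 1
            rw [ha_def, ← Real.rpow_natCast (e ^ ((1:ℝ)/3)) 2, ← Real.rpow_mul he0.le]
            norm_num
          have hDpow : D ^ ((1:ℝ)/3) = ENNReal.ofReal b := by
            rw [hDor, ENNReal.ofReal_rpow_of_pos hd0']
          calc L ≤ ENNReal.ofReal (21 * (a^2*b)) := h1
            _ ≤ ENNReal.ofReal (84 * (a^2*b)) := ENNReal.ofReal_le_ofReal (by nlinarith [mul_pos (mul_pos ha0 ha0) hb0])
            _ = ENNReal.ofReal 84 * E ^ ((2:ℝ)/3) * D ^ ((1:ℝ)/3) := by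
                rw [hEpow, hDpow, ← ENNReal.ofReal_mul (by norm_num), ← ENNReal.ofReal_mul (by positivity)]
                congr 1
                ring
            _ ≤ _ := le_self_add


/-- Lemma A.4, second weighted interpolation inequality: there is `C > 0` such that
for every `g` twice continuously differentiable on `[0,1]`,
`∫₀¹ |(d/dr)(r g)|² (1/r) dr
  ≤ C (∫₀¹ ((1−r²)/r)|(d/dr)(r g)|² dr)^{2/3} (∫₀¹ |𝓛g|² r dr)^{1/3}
    + C ∫₀¹ ((1−r²)/r)|(d/dr)(r g)|² dr`, in `[0,∞]`. -/
theorem weighted_interpolation_second :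
    ∃ C : ℝ, 0 < C ∧ ∀ g : ℝ → ℂ, ContDiffOn ℝ 2 g (Set.Icc 0 1) →
      wInt (fun r => ‖dz (fun s => (s : ℂ) * g s) r‖ ^ 2 / r)
        ≤ ENNReal.ofReal C
              * (wInt (fun r => ((1 - r ^ 2) / r) * ‖dz (fun s => (s : ℂ) * g s) r‖ ^ 2))
                  ^ ((2 : ℝ) / 3)
              * (wInt (fun r => ‖Lop g r‖ ^ 2 * r)) ^ ((1 : ℝ) / 3)
          + ENNReal.ofReal C
              * wInt (fun r => ((1 - r ^ 2) / r) * ‖dz (fun s => (s : ℂ) * g s) r‖ ^ 2) := by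
  refine ⟨84, by norm_num, ?_⟩
  intro g hg
  have huD : UniqueDiffOn ℝ (Icc (0:ℝ) 1) := uniqueDiffOn_Icc zero_lt_one
  set G : ℝ → ℂ := fun s => (s : ℂ) * g s with hG_def
  have hoR : ContDiff ℝ 2 (fun s : ℝ => (s : ℂ)) := Complex.ofRealCLM.contDiff
  have hGc : ContDiffOn ℝ 2 G (Icc 0 1) := hoR.contDiffOn.mul hg
  set g1 := derivWithin g (Icc (0:ℝ) 1) with hg1_def
  set g2 := derivWithin g1 (Icc (0:ℝ) 1) with hg2_def
  have hg1C : ContDiffOn ℝ 1 g1 (Icc 0 1) := hg.derivWithin huD (by norm_num)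
  have hgd : DifferentiableOn ℝ g (Icc (0:ℝ) 1) := hg.differentiableOn (by norm_num)
  have hg1d : DifferentiableOn ℝ g1 (Icc (0:ℝ) 1) := hg1C.differentiableOn (by norm_num)
  set ψ := derivWithin G (Icc (0:ℝ) 1) with hψ_def
  have hoRd : ∀ r : ℝ, HasDerivAt (fun x : ℝ => (x : ℂ)) 1 r := by
    intro r
    simpa using (hasDerivAt_id r).ofReal_comp
  have hψeq : ∀ r ∈ Icc (0:ℝ) 1, HasDerivWithinAt G (g r + (r:ℂ) * g1 r) (Icc 0 1) r := by
    intro r hr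
    have h2 : HasDerivWithinAt g (g1 r) (Icc (0:ℝ) 1) r := (hgd r hr).hasDerivWithinAt
    have h3 := ((hoRd r).hasDerivWithinAt).mul h2
    rw [one_mul] at h3
    exact h3
  have hψ : ∀ r ∈ Icc (0:ℝ) 1, ψ r = g r + (r:ℂ) * g1 r :=
    fun r hr => (hψeq r hr).derivWithin (huD r hr)
  have hψC1 : ContDiffOn ℝ 1 ψ (Icc 0 1) := hGc.derivWithin huD (by norm_num)
  have hψcont : ContinuousOn ψ (Icc (0:ℝ) 1) := hψC1.continuousOn
  have hψd : DifferentiableOn ℝ ψ (Icc (0:ℝ) 1) := hψC1.differentiableOn (by norm_num)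
  set ψ1 := derivWithin ψ (Icc (0:ℝ) 1) with hψ1_def
  have hψ1cont : ContinuousOn ψ1 (Icc (0:ℝ) 1) := hψC1.continuousOn_derivWithin huD le_rfl
  have hψ1 : ∀ r ∈ Icc (0:ℝ) 1, ψ1 r = 2 * g1 r + (r:ℂ) * g2 r := by
    intro r hr
    have h1 : HasDerivWithinAt (fun x => g x + (x:ℂ) * g1 x)
        (g1 r + ((1:ℂ) * g1 r + (r:ℂ) * g2 r)) (Icc (0:ℝ) 1) r :=
      ((hgd r hr).hasDerivWithinAt).add
        (((hoRd r).hasDerivWithinAt).mul ((hg1d r hr).hasDerivWithinAt))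
    have h2 : HasDerivWithinAt ψ (g1 r + ((1:ℂ) * g1 r + (r:ℂ) * g2 r)) (Icc (0:ℝ) 1) r :=
      h1.congr (fun x hx => hψ x hx) (hψ r hr)
    have h3 := h2.derivWithin (huD r hr)
    rw [← hψ1_def] at h3
    rw [h3]
    ring
  -- translation from dz to Icc-derivatives
  have hIocIcc : ∀ r ∈ Ioc (0:ℝ) 1, Ioc (0:ℝ) 1 =ᶠ[nhds r] Icc (0:ℝ) 1 := by
    intro r hr
    have h1 : Ioi (0:ℝ) ∈ nhds r := Ioi_mem_nhds hr.1
    rw [Filter.eventuallyEq_set]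
    filter_upwards [h1] with x hx
    simp only [mem_Ioc, mem_Icc]
    constructor
    · rintro ⟨_, h⟩; exact ⟨le_of_lt hx, h⟩
    · rintro ⟨_, h⟩; exact ⟨hx, h⟩
  have hdzG : ∀ r ∈ Ioc (0:ℝ) 1, dz G r = ψ r :=
    fun r hr => derivWithin_congr_set (hIocIcc r hr)
  have hdzg : ∀ r ∈ Ioc (0:ℝ) 1, dz g r = g1 r :=
    fun r hr => derivWithin_congr_set (hIocIcc r hr)
  have hdzdzg : ∀ r ∈ Ioc (0:ℝ) 1, dz (dz g) r = g2 r := by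
    intro r hr
    have h1 : dz (dz g) r = derivWithin g1 (Ioc (0:ℝ) 1) r :=
      derivWithin_congr (fun x hx => hdzg x hx) (hdzg r hr)
    rw [h1, derivWithin_congr_set (hIocIcc r hr)]
  set F : ℝ → ℂ := fun r => (r:ℂ)⁻¹ * ψ1 r - ((r:ℂ)^2)⁻¹ * ψ r with hF_def
  set f : ℝ → ℂ := fun r => (r:ℂ)⁻¹ * ψ r with hf_def
  have hLop : ∀ r ∈ Ioc (0:ℝ) 1, Lop g r = F r := by
    intro r hr
    have hr0 : (r:ℂ) ≠ 0 := Complex.ofReal_ne_zero.mpr (ne_of_gt hr.1)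
    have hrIcc : r ∈ Icc (0:ℝ) 1 := ⟨hr.1.le, hr.2⟩
    simp only [Lop, hF_def]
    rw [hdzdzg r hr, hdzg r hr, hψ1 r hrIcc, hψ r hrIcc]
    field_simp
    ring
  have hinvc : ContinuousOn (fun r : ℝ => ((r:ℂ))⁻¹) (Ioc (0:ℝ) 1) :=
    (Complex.continuous_ofReal.continuousOn).inv₀
      (fun x hx => Complex.ofReal_ne_zero.mpr (ne_of_gt hx.1))
  have hfc : ContinuousOn f (Ioc (0:ℝ) 1) :=
    hinvc.mul (hψcont.mono Ioc_subset_Icc_self)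
  have hsqc : ContinuousOn (fun r : ℝ => (((r:ℂ))^2)⁻¹) (Ioc (0:ℝ) 1) :=
    ((Complex.continuous_ofReal.continuousOn).pow 2).inv₀
      (fun x hx => pow_ne_zero 2 (Complex.ofReal_ne_zero.mpr (ne_of_gt hx.1)))
  have hFc : ContinuousOn F (Ioc (0:ℝ) 1) :=
    (hinvc.mul (hψ1cont.mono Ioc_subset_Icc_self)).sub
      (hsqc.mul (hψcont.mono Ioc_subset_Icc_self))
  have hfd : ∀ r ∈ Ioo (0:ℝ) 1, HasDerivAt f (F r) r := by
    intro r hr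
    have hr0 : r ≠ 0 := ne_of_gt hr.1
    have hrC : (r:ℂ) ≠ 0 := Complex.ofReal_ne_zero.mpr hr0
    have hmem : Icc (0:ℝ) 1 ∈ nhds r := Icc_mem_nhds hr.1 hr.2
    have hψat : HasDerivAt ψ (ψ1 r) r :=
      ((hψd r ⟨hr.1.le, hr.2.le⟩).hasDerivWithinAt).hasDerivAt hmem
    have hinv : HasDerivAt (fun x : ℝ => ((x:ℂ))⁻¹) (-1 / (r:ℂ)^2) r := by
      have h0 : HasDerivAt (fun x : ℝ => ((x:ℂ))⁻¹) (-(((r:ℂ))^2)⁻¹) r :=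
        (hasDerivAt_inv hrC).comp_ofReal
      have : -(((r:ℂ))^2)⁻¹ = -1 / (r:ℂ)^2 := by ring
      rwa [this] at h0
    have h := hinv.mul hψat
    have heq : -1 / (r:ℂ)^2 * ψ r + ((r:ℂ))⁻¹ * ψ1 r = F r := by
      simp only [hF_def]
      field_simp
      ring
    rw [heq] at h
    exact h
  -- rewrite the three integrals
  have hw1 : wInt (fun r => ‖dz G r‖ ^ 2 / r)
      = ∫⁻ r in Ioo (0:ℝ) 1, ENNReal.ofReal (r * ‖f r‖^2) := by
    rw [wInt]
    apply setLIntegral_congr_fun measurableSet_Ioo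
    intro r hr
    dsimp only
    have h1 : dz G r = ψ r := hdzG r ⟨hr.1, hr.2.le⟩
    have hrC : (r:ℂ) ≠ 0 := Complex.ofReal_ne_zero.mpr (ne_of_gt hr.1)
    have h2 : ψ r = (r:ℂ) * f r := by
      simp only [hf_def]
      field_simp
    rw [h1, h2, norm_mul, Complex.norm_real, Real.norm_eq_abs, abs_of_pos hr.1]
    congr 1
    have hr0 : r ≠ 0 := ne_of_gt hr.1
    field_simp
  have hw2 : wInt (fun r => ((1 - r ^ 2) / r) * ‖dz G r‖ ^ 2)
      = ∫⁻ r in Ioo (0:ℝ) 1, ENNReal.ofReal ((1 - r^2) * r * ‖f r‖^2) := by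
    rw [wInt]
    apply setLIntegral_congr_fun measurableSet_Ioo
    intro r hr
    dsimp only
    have h1 : dz G r = ψ r := hdzG r ⟨hr.1, hr.2.le⟩
    have hrC : (r:ℂ) ≠ 0 := Complex.ofReal_ne_zero.mpr (ne_of_gt hr.1)
    have h2 : ψ r = (r:ℂ) * f r := by
      simp only [hf_def]
      field_simp
    rw [h1, h2, norm_mul, Complex.norm_real, Real.norm_eq_abs, abs_of_pos hr.1]
    congr 1
    have hr0 : r ≠ 0 := ne_of_gt hr.1
    field_simp
  have hw3 : wInt (fun r => ‖Lop g r‖ ^ 2 * r)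
      = ∫⁻ r in Ioo (0:ℝ) 1, ENNReal.ofReal (‖F r‖^2 * r) := by
    rw [wInt]
    apply setLIntegral_congr_fun measurableSet_Ioo
    intro r hr
    dsimp only
    rw [hLop r ⟨hr.1, hr.2.le⟩]
  rw [hw1, hw2, hw3]
  exact core f F hfc hFc hfd
end

section
/- For all real numbers x, y with 0 < x < y, one has e^{x−y}·(x/y) < I₁(x)/I₁(y) < e^{x−y}·(y/x)^{1/2}. (Lemma A.6, ratio bounds for the modified Bessel function of the first kind.) -/
/-- The modified Bessel function of the first kind of order one,
`I₁(x) = Σ_{k=0}^∞ (1/(k! (k+1)!)) (x/2)^{2k+1}`. -/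
noncomputable def besselI1 (x : ℝ) : ℝ :=
  ∑' k : ℕ, 1 / ((Nat.factorial k : ℝ) * (Nat.factorial (k + 1) : ℝ)) * (x / 2) ^ (2 * k + 1)


noncomputable def bb (k : ℕ) : ℝ :=
  1 / ((Nat.factorial k : ℝ) * (Nat.factorial (k + 1) : ℝ))

lemma bb_pos (k : ℕ) : 0 < bb k := by
  unfold bb; positivity

lemma bb_succ (k : ℕ) : bb (k + 1) * ((k + 1) * (k + 2)) = bb k := by
  unfold bb
  rw [Nat.factorial_succ (k+1), Nat.factorial_succ k]
  push_cast
  have h1 : (Nat.factorial k : ℝ) ≠ 0 := Nat.cast_ne_zero.2 (Nat.factorial_ne_zero k)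
  have h2 : (Nat.factorial (k+1) : ℝ) ≠ 0 := Nat.cast_ne_zero.2 (Nat.factorial_ne_zero (k+1))
  field_simp
  ring

lemma bb_le (k : ℕ) : bb k ≤ 1 / (Nat.factorial k : ℝ) := by
  unfold bb
  have h1 : (0:ℝ) < Nat.factorial k := by positivity
  have h2 : (1:ℝ) ≤ Nat.factorial (k+1) := by exact_mod_cast Nat.one_le_iff_ne_zero.2 (Nat.factorial_ne_zero _)
  rw [div_le_div_iff₀ (by positivity) h1]
  nlinarith

lemma master (q : ℝ) (hq : 0 ≤ q) :
    Summable fun k : ℕ => (2 * (k:ℝ) + 1) * (2 * k + 2) * bb k * q ^ k := by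
  apply Summable.of_nonneg_of_le (f := fun k : ℕ => 16 * ((4*q) ^ k / Nat.factorial k))
  · intro k
    have := bb_pos k
    positivity
  · intro k
    have hk : ((k:ℝ) + 1) ≤ 2 ^ (k+1) := by
      have h : k + 1 ≤ 2 ^ k := Nat.lt_two_pow_self
      have : (k:ℝ) + 1 ≤ 2 ^ k := by exact_mod_cast h
      have h2 : (2:ℝ)^k ≤ 2^(k+1) := by
        apply pow_le_pow_right₀ (by norm_num) (by omega)
      linarith
    have h1 : (2 * (k:ℝ) + 1) * (2 * k + 2) ≤ 16 * 4 ^ k := by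
      have : (2 * (k:ℝ) + 2)^2 ≤ (2 * 2^(k+1))^2 := by
        apply pow_le_pow_left₀ (by positivity); nlinarith
      have h4 : ((2:ℝ) ^ (k+1))^2 = 4 * 4 ^ k := by
        rw [← pow_mul, show (k+1)*2 = 2*k+2 by ring, pow_add, pow_mul]
        norm_num; ring
      nlinarith [pow_pos (by norm_num : (0:ℝ) < 2) (k+1), pow_pos (by norm_num : (0:ℝ) < 4) k]
    have h2 : bb k ≤ 1 / Nat.factorial k := bb_le k
    have h3 : ((4:ℝ)*q)^k = 4^k * q^k := mul_pow 4 q k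
    have hfac : (0:ℝ) < Nat.factorial k := by positivity
    rw [h3]
    rw [div_eq_mul_inv]
    have hbb := bb_pos k
    calc (2 * (k:ℝ) + 1) * (2 * k + 2) * bb k * q ^ k
        ≤ (16 * 4^k) * (1/Nat.factorial k) * q^k := by
          apply mul_le_mul_of_nonneg_right _ (by positivity)
          apply mul_le_mul h1 h2 (le_of_lt hbb) (by positivity)
      _ = 16 * (4^k * q^k * (Nat.factorial k : ℝ)⁻¹) := by field_simp
  · exact (Real.summable_pow_div_factorial (4*q)).mul_left 16

lemma summable_gen (s : ℝ) (c : ℕ → ℝ) (m : ℕ)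
    (hc : ∀ k, |c k| ≤ 4 * ((2 * (k:ℝ) + 1) * (2 * k + 2))) :
    Summable fun k : ℕ => c k * bb k * s ^ (2 * k + m) := by
  apply Summable.of_norm
  apply Summable.of_nonneg_of_le (f := fun k : ℕ =>
    |s| ^ m * 4 * ((2 * (k:ℝ) + 1) * (2 * k + 2) * bb k * (s^2) ^ k))
    (fun k => norm_nonneg _)
  · intro k
    have hbb := bb_pos k
    have h1 : ‖c k * bb k * s ^ (2 * k + m)‖ = |c k| * bb k * |s| ^ (2 * k + m) := by
      rw [Real.norm_eq_abs, abs_mul, abs_mul, abs_pow, abs_of_pos hbb]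
    rw [h1, pow_add, pow_mul, sq_abs]
    calc |c k| * bb k * ((s ^ 2) ^ k * |s| ^ m)
        ≤ (4 * ((2 * (k:ℝ) + 1) * (2 * k + 2))) * bb k * ((s ^ 2) ^ k * |s| ^ m) := by
          apply mul_le_mul_of_nonneg_right _ (by positivity)
          exact mul_le_mul_of_nonneg_right (hc k) (le_of_lt hbb)
      _ = |s| ^ m * 4 * ((2 * (k:ℝ) + 1) * (2 * k + 2) * bb k * (s^2) ^ k) := by ring
  · exact (master (s^2) (sq_nonneg s)).mul_left _

lemma summable_shape (s : ℝ) (c : ℕ → ℝ) (m : ℕ)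
    (hc : ∀ k, |c k| ≤ 4 * ((2 * (k:ℝ) + 1) * (2 * k + 2))) (f : ℕ → ℝ)
    (hf : ∀ k, f k = c k * bb k * s ^ (2 * k + m)) : Summable f :=
  (summable_gen s c m hc).congr fun k => (hf k).symm

noncomputable def besselI1' (x : ℝ) : ℝ :=
  ∑' k : ℕ, 1 / ((Nat.factorial k : ℝ) * (Nat.factorial (k + 1) : ℝ)) * (x / 2) ^ (2 * k + 1)

noncomputable def I1D (x : ℝ) : ℝ :=
  ∑' k : ℕ, bb k * ((2 * (k:ℝ) + 1) * (x / 2) ^ (2 * k)) / 2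

noncomputable def I1DD (x : ℝ) : ℝ :=
  ∑' k : ℕ, bb k * ((2 * (k:ℝ) + 1) * (2 * k) * (x / 2) ^ (2 * k - 1)) / 4

lemma besselI1'_eq (x : ℝ) : besselI1' x = ∑' k : ℕ, bb k * (x / 2) ^ (2 * k + 1) := rfl

lemma summable_I1 (x : ℝ) : Summable fun k : ℕ => bb k * (x / 2) ^ (2 * k + 1) := by
  apply summable_shape (x/2) (fun _ => 1) 1
  · intro k; rw [abs_one]; push_cast; nlinarith [Nat.cast_nonneg (α := ℝ) k]
  · intro k; ring

lemma summable_I1D (x : ℝ) : Summable fun k : ℕ => bb k * ((2 * (k:ℝ) + 1) * (x / 2) ^ (2 * k)) / 2 := by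
  apply summable_shape (x/2) (fun k => (2 * (k:ℝ) + 1) / 2) 0
  · intro k
    have h : (0:ℝ) ≤ (k:ℝ) := Nat.cast_nonneg k
    rw [abs_of_nonneg (by linarith)]
    nlinarith
  · intro k; ring

lemma summable_I1DD (x : ℝ) : Summable fun k : ℕ =>
    bb k * ((2 * (k:ℝ) + 1) * (2 * k) * (x / 2) ^ (2 * k - 1)) / 4 := by
  set a : ℝ := |x| / 2 with ha
  have ha0 : 0 ≤ a := by positivity
  apply Summable.of_norm
  apply Summable.of_nonneg_of_le (f := fun k : ℕ =>
      (2 * (k:ℝ) + 1) * (2 * k + 2) * bb k * ((a ^ 2) ^ k + 1))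
      (fun k => norm_nonneg _)
  · intro k
    have hbb := bb_pos k
    have h : (0:ℝ) ≤ (k:ℝ) := Nat.cast_nonneg k
    have habs : ‖bb k * ((2 * (k:ℝ) + 1) * (2 * k) * (x / 2) ^ (2 * k - 1)) / 4‖
        = bb k * ((2 * (k:ℝ) + 1) * (2 * k) * a ^ (2 * k - 1)) / 4 := by
      rw [Real.norm_eq_abs, abs_div, abs_mul, abs_mul, abs_mul, abs_pow, abs_of_pos hbb,
        abs_div, abs_of_nonneg (by linarith : (0:ℝ) ≤ 2*(k:ℝ)+1),
        abs_of_nonneg (by positivity : (0:ℝ) ≤ (2*k:ℝ))]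
      norm_num [ha]
    rw [habs]
    have hq0 : (0:ℝ) ≤ (a ^ 2) ^ k := by positivity
    have hpow : a ^ (2 * k - 1) ≤ (a ^ 2) ^ k + 1 := by
      rcases le_or_gt a 1 with hle | hgt
      · have : a ^ (2 * k - 1) ≤ 1 := pow_le_one₀ ha0 hle
        linarith
      · have : a ^ (2 * k - 1) ≤ a ^ (2 * k) :=
          pow_le_pow_right₀ (le_of_lt hgt) (by omega)
        rw [pow_mul] at this
        linarith
    have hco : (2 * (k:ℝ) + 1) * (2 * k) / 4 ≤ (2 * (k:ℝ) + 1) * (2 * k + 2) := by nlinarith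
    have hp0 : (0:ℝ) ≤ a ^ (2 * k - 1) := by positivity
    calc bb k * ((2 * (k:ℝ) + 1) * (2 * k) * a ^ (2 * k - 1)) / 4
        = bb k * ((2 * (k:ℝ) + 1) * (2 * k) / 4) * a ^ (2 * k - 1) := by ring
      _ ≤ bb k * ((2 * (k:ℝ) + 1) * (2 * k + 2)) * ((a ^ 2) ^ k + 1) := by
          apply mul_le_mul (mul_le_mul_of_nonneg_left hco (le_of_lt hbb)) hpow hp0
          positivity
      _ = (2 * (k:ℝ) + 1) * (2 * k + 2) * bb k * ((a ^ 2) ^ k + 1) := by ring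
  · have h1 := master (a ^ 2) (by positivity : (0:ℝ) ≤ a ^ 2)
    have h2 := master 1 one_pos.le
    exact (h1.add h2).congr fun k => by rw [one_pow]; ring

lemma hasDerivAt_besselI1' (x : ℝ) : HasDerivAt besselI1' (I1D x) x := by
  have key : HasDerivAt (fun z => ∑' k : ℕ, bb k * (z / 2) ^ (2 * k + 1))
      (∑' k : ℕ, bb k * ((2 * (k:ℝ) + 1) * (x / 2) ^ (2 * k)) / 2) x := by
    set R : ℝ := |x| + 3 with hR
    have hR3 : (3:ℝ) ≤ R := by have := abs_nonneg x; rw [hR]; linarith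
    apply hasDerivAt_tsum_of_isPreconnected
      (u := fun k : ℕ => bb k * ((2 * (k:ℝ) + 1) * (R / 2) ^ (2 * k)) / 2)
      (t := Metric.ball (0:ℝ) R) (y₀ := x)
      (g := fun (k : ℕ) (z : ℝ) => bb k * (z / 2) ^ (2 * k + 1))
      (g' := fun (k : ℕ) (z : ℝ) => bb k * ((2 * (k:ℝ) + 1) * (z / 2) ^ (2 * k)) / 2)
    · exact summable_I1D R
    · exact Metric.isOpen_ball
    · exact (convex_ball (0:ℝ) R).isPreconnected
    · intro k y hy
      have h := (((hasDerivAt_id y).div_const 2).pow (2 * k + 1)).const_mul (bb k)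
      convert h using 1
      · rfl
      · rfl
      have h1 : 2 * k + 1 - 1 = 2 * k := by omega
      simp only [id_eq, h1]
      push_cast
      ring
    · intro k y hy
      have hyR : |y| ≤ R := by
        rw [Metric.mem_ball, Real.dist_eq, sub_zero] at hy
        exact le_of_lt hy
      have hbb := bb_pos k
      have hk : (0:ℝ) ≤ 2 * (k:ℝ) + 1 := by positivity
      have hpow : |y / 2| ^ (2 * k) ≤ (R / 2) ^ (2 * k) := by
        apply pow_le_pow_left₀ (abs_nonneg _)
        rw [abs_div]
        have : |(2:ℝ)| = 2 := by norm_num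
        rw [this]
        linarith [hyR]
      rw [Real.norm_eq_abs, abs_div, abs_mul, abs_mul, abs_pow, abs_of_pos hbb,
        abs_of_nonneg hk]
      have h2 : |(2:ℝ)| = 2 := by norm_num
      rw [h2]
      gcongr
    · rw [Metric.mem_ball, Real.dist_eq, sub_zero]
      linarith [abs_nonneg x]
    · exact summable_I1 x
    · rw [Metric.mem_ball, Real.dist_eq, sub_zero]
      linarith [abs_nonneg x]
  exact key

lemma hasDerivAt_I1D (x : ℝ) : HasDerivAt I1D (I1DD x) x := by
  have key : HasDerivAt (fun z => ∑' k : ℕ, bb k * ((2 * (k:ℝ) + 1) * (z / 2) ^ (2 * k)) / 2)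
      (∑' k : ℕ, bb k * ((2 * (k:ℝ) + 1) * (2 * k) * (x / 2) ^ (2 * k - 1)) / 4) x := by
    set R : ℝ := |x| + 3 with hR
    have hR3 : (3:ℝ) ≤ R := by have := abs_nonneg x; rw [hR]; linarith
    apply hasDerivAt_tsum_of_isPreconnected
      (u := fun k : ℕ => bb k * ((2 * (k:ℝ) + 1) * (2 * k) * (R / 2) ^ (2 * k - 1)) / 4)
      (t := Metric.ball (0:ℝ) R) (y₀ := x)
      (g := fun (k : ℕ) (z : ℝ) => bb k * ((2 * (k:ℝ) + 1) * (z / 2) ^ (2 * k)) / 2)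
      (g' := fun (k : ℕ) (z : ℝ) => bb k * ((2 * (k:ℝ) + 1) * (2 * k) * (z / 2) ^ (2 * k - 1)) / 4)
    · exact summable_I1DD R
    · exact Metric.isOpen_ball
    · exact (convex_ball (0:ℝ) R).isPreconnected
    · intro k y hy
      have h := ((((hasDerivAt_id y).div_const 2).pow (2 * k)).const_mul
        (2 * (k:ℝ) + 1)).const_mul (bb k) |>.div_const 2
      convert h using 1
      · rfl
      · rfl
      simp only [id_eq]
      push_cast
      ring
    · intro k y hy
      have hyR : |y| ≤ R := by
        rw [Metric.mem_ball, Real.dist_eq, sub_zero] at hy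
        exact le_of_lt hy
      have hbb := bb_pos k
      have hk : (0:ℝ) ≤ 2 * (k:ℝ) + 1 := by positivity
      have hy2 : |y / 2| ≤ R / 2 := by
        rw [abs_div]
        have : |(2:ℝ)| = 2 := by norm_num
        rw [this]; linarith
      have hpow : |y / 2| ^ (2 * k - 1) ≤ (R / 2) ^ (2 * k - 1) :=
        pow_le_pow_left₀ (abs_nonneg _) hy2 _
      rw [Real.norm_eq_abs, abs_div, abs_mul, abs_mul, abs_mul, abs_pow, abs_of_pos hbb,
        abs_of_nonneg hk, abs_of_nonneg (by positivity : (0:ℝ) ≤ (2*k:ℝ))]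
      have h4 : |(4:ℝ)| = 4 := by norm_num
      rw [h4]
      gcongr
    · rw [Metric.mem_ball, Real.dist_eq, sub_zero]
      linarith [abs_nonneg x]
    · exact summable_I1D x
    · rw [Metric.mem_ball, Real.dist_eq, sub_zero]
      linarith [abs_nonneg x]
  exact key

lemma besselI1'_pos {t : ℝ} (ht : 0 < t) : 0 < besselI1' t := by
  rw [besselI1'_eq]
  apply Summable.tsum_pos (summable_I1 t) _ 0
  · have := bb_pos 0
    positivity
  · intro k
    have := bb_pos k
    positivity

lemma abs_le_quad_1 (k : ℕ) : |(2 * (k:ℝ) + 1)| ≤ 4 * ((2 * (k:ℝ) + 1) * (2 * k + 2)) := by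
  have h : (0:ℝ) ≤ (k:ℝ) := Nat.cast_nonneg k
  rw [abs_of_nonneg (by linarith)]; nlinarith

lemma tI1D_eq (t : ℝ) : t * I1D t = ∑' k : ℕ, bb k * (2 * (k:ℝ) + 1) * (t / 2) ^ (2 * k + 1) := by
  unfold I1D
  rw [← tsum_mul_left]
  apply tsum_congr
  intro k
  rw [pow_succ]
  ring

lemma tI1_eq (t : ℝ) : t * besselI1' t = ∑' k : ℕ, 2 * bb k * (t / 2) ^ (2 * k + 2) := by
  rw [besselI1'_eq, ← tsum_mul_left]
  apply tsum_congr
  intro k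
  have : 2 * k + 2 = (2 * k + 1) + 1 := by omega
  rw [this, pow_succ]
  ring

lemma t2I1DD_eq (t : ℝ) :
    t ^ 2 * I1DD t = ∑' k : ℕ, bb k * ((2 * (k:ℝ) + 1) * (2 * k)) * (t / 2) ^ (2 * k + 1) := by
  unfold I1DD
  rw [← tsum_mul_left]
  apply tsum_congr
  intro k
  cases k with
  | zero => norm_num
  | succ n =>
    have h1 : 2 * (n + 1) - 1 = 2 * n + 1 := by omega
    have h2 : 2 * (n + 1) + 1 = (2 * n + 1) + 2 := by omega
    rw [h1, h2, pow_add]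
    push_cast
    ring

lemma shift_eq (t : ℝ) :
    ∑' k : ℕ, bb k * (4 * (k:ℝ) * (k + 1)) * (t / 2) ^ (2 * k + 1)
      = ∑' k : ℕ, 4 * bb k * (t / 2) ^ (2 * k + 3) := by
  have hs : Summable fun k : ℕ => bb k * (4 * (k:ℝ) * (k + 1)) * (t / 2) ^ (2 * k + 1) := by
    apply summable_shape (t/2) (fun k => 4 * (k:ℝ) * (k + 1)) 1
    · intro k
      have h : (0:ℝ) ≤ (k:ℝ) := Nat.cast_nonneg k
      rw [abs_of_nonneg (by positivity)]; nlinarith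
    · intro k; ring
  rw [Summable.tsum_eq_zero_add hs]
  have h0 : bb 0 * (4 * ((0:ℕ):ℝ) * (((0:ℕ):ℝ) + 1)) * (t / 2) ^ (2 * 0 + 1) = 0 := by norm_num
  rw [h0, zero_add]
  apply tsum_congr
  intro k
  have he : 2 * (k + 1) + 1 = 2 * k + 3 := by omega
  rw [he]
  push_cast
  linear_combination (4 * (t / 2) ^ (2 * k + 3)) * bb_succ k

lemma summable_A (t : ℝ) :
    Summable fun k : ℕ => bb k * ((2 * (k:ℝ) + 1) * (2 * k)) * (t / 2) ^ (2 * k + 1) := by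
  apply summable_shape (t/2) (fun k => (2 * (k:ℝ) + 1) * (2 * k)) 1
  · intro k
    have h : (0:ℝ) ≤ (k:ℝ) := Nat.cast_nonneg k
    rw [abs_of_nonneg (by positivity)]; nlinarith
  · intro k; ring

lemma summable_B (t : ℝ) :
    Summable fun k : ℕ => bb k * (2 * (k:ℝ) + 1) * (t / 2) ^ (2 * k + 1) :=
  summable_shape (t/2) (fun k => 2 * (k:ℝ) + 1) 1 abs_le_quad_1 _ fun k => by ring

lemma summable_C (t : ℝ) : Summable fun k : ℕ => 4 * bb k * (t / 2) ^ (2 * k + 3) := by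
  apply summable_shape (t/2) (fun _ => 4) 3
  · intro k
    have h : (0:ℝ) ≤ (k:ℝ) := Nat.cast_nonneg k
    rw [abs_of_nonneg (by norm_num)]; nlinarith
  · intro k; ring

lemma ode (t : ℝ) : t ^ 2 * I1DD t + t * I1D t = (t ^ 2 + 1) * besselI1' t := by
  have h1 : t ^ 2 * I1DD t + t * I1D t
      = ∑' k : ℕ, (bb k * (4 * (k:ℝ) * (k + 1)) * (t / 2) ^ (2 * k + 1)
          + bb k * (t / 2) ^ (2 * k + 1)) := by
    rw [t2I1DD_eq, tI1D_eq, ← Summable.tsum_add (summable_A t) (summable_B t)]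
    apply tsum_congr
    intro k
    ring
  have h2 : (t ^ 2 + 1) * besselI1' t
      = ∑' k : ℕ, (4 * bb k * (t / 2) ^ (2 * k + 3) + bb k * (t / 2) ^ (2 * k + 1)) := by
    rw [besselI1'_eq, ← tsum_mul_left]
    apply tsum_congr
    intro k
    have he : 2 * k + 3 = (2 * k + 1) + 2 := by omega
    rw [he, pow_add]
    ring
  rw [h1, h2]
  have hs1 : Summable fun k : ℕ => bb k * (4 * (k:ℝ) * (k + 1)) * (t / 2) ^ (2 * k + 1) := by
    apply summable_shape (t/2) (fun k => 4 * (k:ℝ) * (k + 1)) 1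
    · intro k
      have h : (0:ℝ) ≤ (k:ℝ) := Nat.cast_nonneg k
      rw [abs_of_nonneg (by positivity)]; nlinarith
    · intro k; ring
  rw [Summable.tsum_add hs1 (summable_I1 t), Summable.tsum_add (summable_C t) (summable_I1 t), shift_eq]

lemma lower_core {t : ℝ} (ht : 0 < t) :
    t * I1D t - besselI1' t - t * besselI1' t < 0 := by
  set s : ℝ := t / 2 with hs
  have hs0 : 0 < s := by positivity
  have hsub : t * I1D t - besselI1' t = ∑' k : ℕ, 2 * (k:ℝ) * bb k * s ^ (2 * k + 1) := by
    rw [tI1D_eq, besselI1'_eq, ← Summable.tsum_sub (summable_B t) (summable_I1 t)]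
    apply tsum_congr; intro k; ring
  have hSk : Summable fun k : ℕ => 2 * (k:ℝ) * bb k * s ^ (2 * k + 1) := by
    apply summable_shape s (fun k => 2 * (k:ℝ)) 1
    · intro k
      have h : (0:ℝ) ≤ (k:ℝ) := Nat.cast_nonneg k
      rw [abs_of_nonneg (by positivity)]; nlinarith
    · intro k; ring
  have hSq : Summable fun k : ℕ => (k:ℝ) ^ 2 * bb k * s ^ (2 * k) := by
    apply summable_shape s (fun k => (k:ℝ) ^ 2) 0
    · intro k
      have h : (0:ℝ) ≤ (k:ℝ) := Nat.cast_nonneg k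
      rw [abs_of_nonneg (by positivity)]; nlinarith
    · intro k; ring
  have hS2 : Summable fun k : ℕ => bb k * s ^ (2 * k + 2) := by
    apply summable_shape s (fun _ => 1) 2
    · intro k
      have h : (0:ℝ) ≤ (k:ℝ) := Nat.cast_nonneg k
      rw [abs_one]; nlinarith
    · intro k; ring
  -- AM-GM termwise
  have step1 : ∑' k : ℕ, 2 * (k:ℝ) * bb k * s ^ (2 * k + 1)
      ≤ ∑' k : ℕ, ((k:ℝ) ^ 2 * bb k * s ^ (2 * k) + bb k * s ^ (2 * k + 2)) := by
    apply Summable.tsum_le_tsum _ hSk (hSq.add hS2)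
    intro k
    have hbb := bb_pos k
    have key : 2 * (k:ℝ) * s ^ (2 * k + 1) ≤ (k:ℝ) ^ 2 * s ^ (2 * k) + s ^ (2 * k + 2) := by
      have e1 : s ^ (2 * k) = (s ^ k) ^ 2 := by rw [← pow_mul]; ring_nf
      have e2 : s ^ (2 * k + 2) = (s ^ (k + 1)) ^ 2 := by rw [← pow_mul]; ring_nf
      have e3 : s ^ (2 * k + 1) = s ^ k * s ^ (k + 1) := by rw [← pow_add]; ring_nf
      rw [e1, e2, e3]
      nlinarith [sq_nonneg ((k:ℝ) * s ^ k - s ^ (k + 1))]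
    nlinarith [key, bb_pos k]
  have step2 : ∑' k : ℕ, ((k:ℝ) ^ 2 * bb k * s ^ (2 * k) + bb k * s ^ (2 * k + 2))
      = (∑' k : ℕ, (k:ℝ) ^ 2 * bb k * s ^ (2 * k)) + ∑' k : ℕ, bb k * s ^ (2 * k + 2) :=
    Summable.tsum_add hSq hS2
  have step3 : ∑' k : ℕ, (k:ℝ) ^ 2 * bb k * s ^ (2 * k) < ∑' k : ℕ, bb k * s ^ (2 * k + 2) := by
    rw [Summable.tsum_eq_zero_add hSq]
    have h0 : ((0:ℕ):ℝ) ^ 2 * bb 0 * s ^ (2 * 0) = 0 := by norm_num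
    rw [h0, zero_add]
    apply Summable.tsum_lt_tsum (i := 0) _ _ (hSq.comp_injective (add_left_injective 1)) hS2
    · intro k
      have hb := bb_pos (k + 1)
      have hrec := bb_succ k
      have hk : (0:ℝ) ≤ (k:ℝ) := Nat.cast_nonneg k
      have he : 2 * (k + 1) = 2 * k + 2 := by omega
      simp only [Function.comp_apply]
      rw [he]
      push_cast
      have hcoef : ((k:ℝ) + 1) ^ 2 * bb (k + 1) ≤ bb k := by nlinarith
      have hp : (0:ℝ) ≤ s ^ (2 * k + 2) := by positivity
      nlinarith
    · have he : 2 * (0 + 1) = 2 * 0 + 2 := by omega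
      simp only [Function.comp_apply]
      rw [he]
      have hb1 := bb_pos 1
      have hrec := bb_succ 0
      have h1 : bb 1 < bb 0 := by
        have h0 := bb_pos 0
        push_cast at hrec
        nlinarith
      push_cast
      have hp : (0:ℝ) < s ^ 2 := by positivity
      nlinarith [mul_lt_mul_of_pos_right h1 hp]
  have htI1 : t * besselI1' t = ∑' k : ℕ, 2 * bb k * s ^ (2 * k + 2) := tI1_eq t
  have hfin : ∑' k : ℕ, 2 * bb k * s ^ (2 * k + 2)
      = 2 * ∑' k : ℕ, bb k * s ^ (2 * k + 2) := by
    rw [← tsum_mul_left]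
    apply tsum_congr; intro k; ring
  have : t * I1D t - besselI1' t < t * besselI1' t := by
    rw [hsub, htI1, hfin]
    calc ∑' k : ℕ, 2 * (k:ℝ) * bb k * s ^ (2 * k + 1)
        ≤ ∑' k : ℕ, ((k:ℝ) ^ 2 * bb k * s ^ (2 * k) + bb k * s ^ (2 * k + 2)) := step1
      _ = (∑' k : ℕ, (k:ℝ) ^ 2 * bb k * s ^ (2 * k)) + ∑' k : ℕ, bb k * s ^ (2 * k + 2) := step2
      _ < (∑' k : ℕ, bb k * s ^ (2 * k + 2)) + ∑' k : ℕ, bb k * s ^ (2 * k + 2) := by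
          linarith [step3]
      _ = 2 * ∑' k : ℕ, bb k * s ^ (2 * k + 2) := by ring
  linarith

noncomputable def Dfun (t : ℝ) : ℝ := besselI1' t + 2 * t * I1D t - 2 * t * besselI1' t

lemma Dfun_eq (t : ℝ) : Dfun t
    = ∑' k : ℕ, (bb k * (4 * (k:ℝ) + 3) * (t / 2) ^ (2 * k + 1)
        - 4 * bb k * (t / 2) ^ (2 * k + 2)) := by
  have h1 : 2 * t * I1D t = ∑' k : ℕ, 2 * (bb k * (2 * (k:ℝ) + 1) * (t / 2) ^ (2 * k + 1)) := by
    have : 2 * t * I1D t = 2 * (t * I1D t) := by ring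
    rw [this, tI1D_eq, tsum_mul_left]
  have h2 : 2 * t * besselI1' t = ∑' k : ℕ, 2 * (2 * bb k * (t / 2) ^ (2 * k + 2)) := by
    have : 2 * t * besselI1' t = 2 * (t * besselI1' t) := by ring
    rw [this, tI1_eq, tsum_mul_left]
  have hs1 : Summable fun k : ℕ => 2 * (bb k * (2 * (k:ℝ) + 1) * (t / 2) ^ (2 * k + 1)) :=
    (summable_B t).mul_left 2
  have hs2 : Summable fun k : ℕ => 2 * (2 * bb k * (t / 2) ^ (2 * k + 2)) := by
    apply Summable.mul_left
    apply summable_shape (t/2) (fun _ => 2) 2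
    · intro k
      have h : (0:ℝ) ≤ (k:ℝ) := Nat.cast_nonneg k
      rw [abs_of_nonneg (by norm_num)]; nlinarith
    · intro k; ring
  unfold Dfun
  rw [h1, h2, besselI1'_eq, ← Summable.tsum_add (summable_I1 t) hs1, ← Summable.tsum_sub ((summable_I1 t).add hs1) hs2]
  apply tsum_congr
  intro k
  ring

lemma Dfun_pos_small {t : ℝ} (ht : 0 < t) (ht2 : t < 3 / 2) : 0 < Dfun t := by
  rw [Dfun_eq]
  have hs0 : 0 < t / 2 := by positivity
  have hs34 : t / 2 < 3 / 4 := by linarith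
  have hsummable : Summable fun k : ℕ =>
      (bb k * (4 * (k:ℝ) + 3) * (t / 2) ^ (2 * k + 1) - 4 * bb k * (t / 2) ^ (2 * k + 2)) := by
    apply Summable.sub
    · apply summable_shape (t/2) (fun k => 4 * (k:ℝ) + 3) 1
      · intro k
        have h : (0:ℝ) ≤ (k:ℝ) := Nat.cast_nonneg k
        rw [abs_of_nonneg (by positivity)]; nlinarith
      · intro k; ring
    · apply summable_shape (t/2) (fun _ => 4) 2
      · intro k
        have h : (0:ℝ) ≤ (k:ℝ) := Nat.cast_nonneg k
        rw [abs_of_nonneg (by norm_num)]; nlinarith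
      · intro k; ring
  apply Summable.tsum_pos hsummable _ 0
  · have hb0 := bb_pos 0
    norm_num
    nlinarith [mul_pos (mul_pos hb0 hs0) (by linarith : (0:ℝ) < 3 - 4 * (t / 2))]
  · intro k
    have hbb := bb_pos k
    have hk : (0:ℝ) ≤ (k:ℝ) := Nat.cast_nonneg k
    have hp : (0:ℝ) < (t / 2) ^ (2 * k + 1) := pow_pos hs0 _
    have he : (t / 2) ^ (2 * k + 2) = (t / 2) ^ (2 * k + 1) * (t / 2) := by
      rw [← pow_succ]
    rw [he]
    nlinarith [mul_pos hbb hp, mul_nonneg (mul_nonneg hbb.le hp.le) hk,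
      mul_le_mul_of_nonneg_left (by linarith : 4 * (t / 2) ≤ 3) (mul_pos hbb hp).le]

lemma hasDerivAt_Dfun (t : ℝ) : HasDerivAt Dfun
    (I1D t + (2 * 1 * I1D t + 2 * t * I1DD t) - (2 * 1 * besselI1' t + 2 * t * I1D t)) t := by
  have hc : HasDerivAt (fun y : ℝ => 2 * y) (2 * 1) t := (hasDerivAt_id t).const_mul 2
  have hm1 := hc.mul (hasDerivAt_I1D t)
  have hm2 := hc.mul (hasDerivAt_besselI1' t)
  have h := ((hasDerivAt_besselI1' t).add hm1).sub hm2
  exact h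

lemma continuous_Dfun : Continuous Dfun := by
  rw [continuous_iff_continuousAt]
  intro z
  exact (hasDerivAt_Dfun z).continuousAt

lemma Dfun_pos {t : ℝ} (ht : 0 < t) : 0 < Dfun t := by
  by_contra hcon
  push_neg at hcon
  have ht32 : ¬ t < 3 / 2 := fun h => absurd hcon (not_le.2 (Dfun_pos_small ht h))
  push_neg at ht32
  set S : Set ℝ := {z | 1 ≤ z ∧ Dfun z ≤ 0} with hSdef
  have hne : S.Nonempty := ⟨t, by linarith, hcon⟩
  have hclosed : IsClosed S := by
    have : S = {z | 1 ≤ z} ∩ {z | Dfun z ≤ 0} := rfl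
    rw [this]
    exact (isClosed_le continuous_const continuous_id).inter
      (isClosed_le continuous_Dfun continuous_const)
  have hbdd : BddBelow S := ⟨1, fun z hz => hz.1⟩
  have hcS : sInf S ∈ S := hclosed.csInf_mem hne hbdd
  set c := sInf S with hcdef
  have hc1 : 1 ≤ c := hcS.1
  have hc0 : 0 < c := by linarith
  have hpos_below : ∀ z, 0 < z → z < c → 0 < Dfun z := by
    intro z hz hzc
    rcases lt_or_ge z (3/2) with h | h
    · exact Dfun_pos_small hz h
    · by_contra hno
      push_neg at hno
      have hzS : z ∈ S := ⟨by linarith, hno⟩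
      have := csInf_le hbdd hzS
      rw [← hcdef] at this
      linarith
  have hD0 : Dfun c = 0 := by
    refine le_antisymm hcS.2 ?_
    have htend : Filter.Tendsto Dfun (nhdsWithin c (Set.Iio c)) (nhds (Dfun c)) :=
      (continuous_Dfun.continuousAt).continuousWithinAt
    apply ge_of_tendsto htend
    filter_upwards [Ioo_mem_nhdsLT_of_mem (Set.mem_Ioc.2 ⟨(by linarith : c / 2 < c), le_refl c⟩)]
      with z hz
    exact (hpos_below z (by have := hz.1; linarith) hz.2).le
  have hd := hasDerivAt_Dfun c
  set d : ℝ := I1D c + (2 * 1 * I1D c + 2 * c * I1DD c) - (2 * 1 * besselI1' c + 2 * c * I1D c)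
    with hddef
  have hDc : besselI1' c + 2 * c * I1D c - 2 * c * besselI1' c = 0 := hD0
  have hkey : 2 * c * d = 3 * besselI1' c := by
    rw [hddef]
    linear_combination 4 * (ode c) + (1 - 2 * c) * hDc
  have hdpos : 0 < d := by
    have hI1 := besselI1'_pos hc0
    nlinarith
  have hdnonpos : d ≤ 0 := by
    have hdw : HasDerivWithinAt Dfun d (Set.Iio c) c := hd.hasDerivWithinAt
    rw [hasDerivWithinAt_iff_tendsto_slope] at hdw
    have hdiff : Set.Iio c \ {c} = Set.Iio c := by
      ext z
      simp only [Set.mem_diff, Set.mem_Iio, Set.mem_singleton_iff]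
      exact ⟨fun h => h.1, fun h => ⟨h, ne_of_lt h⟩⟩
    rw [hdiff] at hdw
    apply le_of_tendsto hdw
    filter_upwards [Ioo_mem_nhdsLT_of_mem (Set.mem_Ioc.2 ⟨(by linarith : c / 2 < c), le_refl c⟩)]
      with z hz
    have hz0 : 0 < z := by have := hz.1; linarith
    have hDz : 0 < Dfun z := hpos_below z hz0 hz.2
    rw [slope_def_field, hD0, sub_zero]
    apply le_of_lt
    apply div_neg_of_pos_of_neg hDz
    linarith [hz.2]
  linarith

lemma continuous_besselI1' : Continuous besselI1' := by
  rw [continuous_iff_continuousAt]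
  intro z
  exact (hasDerivAt_besselI1' z).continuousAt

noncomputable def Ffun (t : ℝ) : ℝ := Real.exp (-t) * (besselI1' t / t)

noncomputable def Gfun (t : ℝ) : ℝ := t * Real.exp (-(2 * t)) * (besselI1' t * besselI1' t)

lemma hasDerivAt_Ffun {t : ℝ} (ht : 0 < t) : HasDerivAt Ffun
    (Real.exp (-t) * -1 * (besselI1' t / t)
      + Real.exp (-t) * ((I1D t * t - besselI1' t * 1) / t ^ 2)) t := by
  have hExp : HasDerivAt (fun z : ℝ => Real.exp (-z)) (Real.exp (-t) * -1) t :=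
    (hasDerivAt_id t).neg.exp
  have hQuot : HasDerivAt (fun z : ℝ => besselI1' z / z)
      ((I1D t * t - besselI1' t * 1) / t ^ 2) t :=
    (hasDerivAt_besselI1' t).div (hasDerivAt_id t) (ne_of_gt ht)
  exact hExp.mul hQuot

lemma Ffun_strictAnti : StrictAntiOn Ffun (Set.Ioi 0) := by
  apply strictAntiOn_of_deriv_neg (convex_Ioi 0)
  · intro z hz
    exact (hasDerivAt_Ffun hz).continuousAt.continuousWithinAt
  · intro z hz
    rw [interior_Ioi] at hz
    have hz0 : (0:ℝ) < z := hz
    rw [(hasDerivAt_Ffun hz0).deriv]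
    have hE := lower_core hz0
    have heq : Real.exp (-z) * -1 * (besselI1' z / z)
        + Real.exp (-z) * ((I1D z * z - besselI1' z * 1) / z ^ 2)
        = Real.exp (-z) * (z * I1D z - besselI1' z - z * besselI1' z) / z ^ 2 := by
      field_simp
      ring
    rw [heq]
    apply div_neg_of_neg_of_pos _ (by positivity)
    exact mul_neg_of_pos_of_neg (Real.exp_pos _) hE

lemma hasDerivAt_Gfun (t : ℝ) : HasDerivAt Gfun
    ((1 * Real.exp (-(2 * t)) + t * (Real.exp (-(2 * t)) * -(2 * 1))) * (besselI1' t * besselI1' t)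
      + t * Real.exp (-(2 * t)) * (I1D t * besselI1' t + besselI1' t * I1D t)) t := by
  have hexp2 : HasDerivAt (fun z : ℝ => Real.exp (-(2 * z))) (Real.exp (-(2 * t)) * -(2 * 1)) t :=
    (((hasDerivAt_id t).const_mul 2).neg).exp
  have hti := (hasDerivAt_id t).mul hexp2
  have hI2 := (hasDerivAt_besselI1' t).mul (hasDerivAt_besselI1' t)
  have h := hti.mul hI2
  exact h

lemma Gfun_strictMono : StrictMonoOn Gfun (Set.Ioi 0) := by
  apply strictMonoOn_of_deriv_pos (convex_Ioi 0)
  · apply Continuous.continuousOn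
    exact (continuous_id.mul ((continuous_const.mul continuous_id).neg.rexp)).mul
      (continuous_besselI1'.mul continuous_besselI1')
  · intro z hz
    rw [interior_Ioi] at hz
    have hz0 : (0:ℝ) < z := hz
    rw [(hasDerivAt_Gfun z).deriv]
    have hD := Dfun_pos hz0
    have hI1 := besselI1'_pos hz0
    have heq : (1 * Real.exp (-(2 * z)) + z * (Real.exp (-(2 * z)) * -(2 * 1)))
          * (besselI1' z * besselI1' z)
        + z * Real.exp (-(2 * z)) * (I1D z * besselI1' z + besselI1' z * I1D z)
        = Real.exp (-(2 * z)) * besselI1' z * Dfun z := by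
      unfold Dfun
      ring
    rw [heq]
    have := Real.exp_pos (-(2 * z))
    positivity

theorem besselI1'_ratio_bounds (x y : ℝ) (hx : 0 < x) (hxy : x < y) :
    Real.exp (x - y) * (x / y) < besselI1' x / besselI1' y
      ∧ besselI1' x / besselI1' y < Real.exp (x - y) * Real.sqrt (y / x) := by
  have hy : 0 < y := lt_trans hx hxy
  have hI1x := besselI1'_pos hx
  have hI1y := besselI1'_pos hy
  have hex := Real.exp_pos x
  have hey := Real.exp_pos y
  constructor
  · have key := Ffun_strictAnti (Set.mem_Ioi.2 hx) (Set.mem_Ioi.2 hy) hxy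
    unfold Ffun at key
    rw [lt_div_iff₀ hI1y]
    rw [Real.exp_neg, Real.exp_neg] at key
    have hpos : (0:ℝ) < Real.exp x * x := by positivity
    have key2 := mul_lt_mul_of_pos_left key hpos
    have heq1 : Real.exp x * x * ((Real.exp x)⁻¹ * (besselI1' x / x)) = besselI1' x := by
      field_simp
    have heq2 : Real.exp x * x * ((Real.exp y)⁻¹ * (besselI1' y / y))
        = Real.exp (x - y) * (x / y) * besselI1' y := by
      rw [Real.exp_sub]
      field_simp
      try ring
    rw [heq1, heq2] at key2
    exact key2
  · have key := Gfun_strictMono (Set.mem_Ioi.2 hx) (Set.mem_Ioi.2 hy) hxy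
    unfold Gfun at key
    have hb : 0 < Real.exp (x - y) * Real.sqrt (y / x) := by
      have : 0 < Real.sqrt (y / x) := Real.sqrt_pos.2 (by positivity)
      positivity
    apply lt_of_pow_lt_pow_left₀ 2 (le_of_lt hb)
    have hsq : (Real.exp (x - y) * Real.sqrt (y / x)) ^ 2
        = Real.exp (x - y) * Real.exp (x - y) * (y / x) := by
      rw [mul_pow, Real.sq_sqrt (by positivity : (0:ℝ) ≤ y / x)]
      ring
    rw [hsq]
    rw [div_pow, div_lt_iff₀ (by positivity : (0:ℝ) < besselI1' y ^ 2)]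
    rw [Real.exp_neg, Real.exp_neg] at key
    have hpos : (0:ℝ) < Real.exp (2 * x) / x := by positivity
    have key2 := mul_lt_mul_of_pos_left key hpos
    have heq1 : Real.exp (2 * x) / x * (x * (Real.exp (2 * x))⁻¹ * (besselI1' x * besselI1' x))
        = besselI1' x ^ 2 := by
      field_simp
    have heq2 : Real.exp (2 * x) / x * (y * (Real.exp (2 * y))⁻¹ * (besselI1' y * besselI1' y))
        = Real.exp (x - y) * Real.exp (x - y) * (y / x) * besselI1' y ^ 2 := by
      rw [Real.exp_sub]
      rw [show (2:ℝ) * x = x + x by ring, show (2:ℝ) * y = y + y by ring,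
        Real.exp_add, Real.exp_add]
      field_simp
    rw [heq1, heq2] at key2
    exact key2


/-- Lemma A.6, ratio bounds: for `0 < x < y`,
`e^{x−y} (x/y) < I₁(x)/I₁(y) < e^{x−y} (y/x)^{1/2}`. -/
theorem besselI1_ratio_bounds (x y : ℝ) (hx : 0 < x) (hxy : x < y) :
    Real.exp (x - y) * (x / y) < besselI1 x / besselI1 y
      ∧ besselI1 x / besselI1 y < Real.exp (x - y) * Real.sqrt (y / x) := by
  have h : besselI1 = besselI1' := rfl
  rw [h]
  exact besselI1'_ratio_bounds x y hx hxy
end
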